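/- arXiv:1608.06363 — 2 statements merged into one kernel-verified Lean document; each statement's English description precedes it below -/
import Mathlib

section
/- Let P, P̄ be symmetric with P ≥ 0 and P + P̄ ≥ 0, and Q ≥ 0, Q + Q̄ ≥ 0, R ≥ 0, R + R̄ ≥ 0. Define Υ⁽²⁾ = R + R̄ + (B+B̄)'(P+P̄)(B+B̄) + σ²(D+D̄)'P(D+D̄), M⁽²⁾ = (B+B̄)'(P+P̄)(A+Ā) + σ²(D+D̄)'P(C+C̄), and assume Υ⁽²⁾ is invertible. Then the updated sum S = Q + Q̄ + (A+Ā)'(P+P̄)(A+Ā) + σ²(C+C̄)'P(C+C̄) − [M⁽²⁾]'[Υ⁽²⁾]⁻¹M⁽²⁾ is positive semidefinite. -/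
open Matrix

lemma psd_conj {k l : ℕ} {A : Matrix (Fin k) (Fin k) ℝ} (hA : A.PosSemidef)
    (B : Matrix (Fin k) (Fin l) ℝ) : (Bᵀ * A * B).PosSemidef := by
  have := hA.conjTranspose_mul_mul_same B
  simpa [conjTranspose_eq_transpose_of_trivial] using this

lemma expand {n m : ℕ} (A' C' : Matrix (Fin n) (Fin n) ℝ) (B' D' : Matrix (Fin n) (Fin m) ℝ)
    (P' P : Matrix (Fin n) (Fin n) ℝ) (hP' : P'ᵀ = P') (hP : Pᵀ = P)
    (R' : Matrix (Fin m) (Fin m) ℝ)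
    (Q' : Matrix (Fin n) (Fin n) ℝ) (σ : ℝ) (L : Matrix (Fin m) (Fin n) ℝ) :
    Q' + Lᵀ*R'*L + (A'+B'*L)ᵀ*P'*(A'+B'*L) + σ^2 • ((C'+D'*L)ᵀ*P*(C'+D'*L))
    = (Q' + A'ᵀ*P'*A' + σ^2 • (C'ᵀ*P*C'))
      + (Lᵀ*(R' + B'ᵀ*P'*B' + σ^2•(D'ᵀ*P*D'))*L
      + Lᵀ*(B'ᵀ*P'*A' + σ^2•(D'ᵀ*P*C'))
      + (B'ᵀ*P'*A' + σ^2•(D'ᵀ*P*C'))ᵀ*L) := by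
  simp only [transpose_add, transpose_mul, transpose_smul, transpose_transpose, hP', hP,
    Matrix.add_mul, Matrix.mul_add, Matrix.smul_mul, Matrix.mul_smul, smul_add, Matrix.mul_assoc]
  abel

lemma Lident {n m : ℕ} (Y : Matrix (Fin m) (Fin m) ℝ) (hY : Yᵀ = Y) (hU : IsUnit Y)
    (M : Matrix (Fin m) (Fin n) ℝ) :
    (-(Y⁻¹*M))ᵀ*Y*(-(Y⁻¹*M)) + (-(Y⁻¹*M))ᵀ*M + Mᵀ*(-(Y⁻¹*M))
    = -(Mᵀ*Y⁻¹*M) := by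
  have hd : IsUnit Y.det := (Matrix.isUnit_iff_isUnit_det Y).mp hU
  have hinv : Y⁻¹ᵀ = Y⁻¹ := by rw [Matrix.transpose_nonsing_inv, hY]
  have h1 : Y⁻¹ * Y = 1 := Matrix.nonsing_inv_mul Y hd
  simp only [transpose_neg, transpose_mul, hinv, Matrix.neg_mul, Matrix.mul_neg, neg_neg]
  rw [Matrix.mul_assoc Mᵀ Y⁻¹ Y, h1, Matrix.mul_one]
  simp only [Matrix.mul_assoc]
  abel

/-- The mean-field Riccati update for the sum P + P̄ preserves
positive semidefiniteness. -/
theorem stmt6 (n m : ℕ)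
    (A Abar C Cbar : Matrix (Fin n) (Fin n) ℝ)
    (B Bbar D Dbar : Matrix (Fin n) (Fin m) ℝ) (σ : ℝ)
    (P Pbar Q Qbar : Matrix (Fin n) (Fin n) ℝ)
    (R Rbar : Matrix (Fin m) (Fin m) ℝ)
    (hP : P.PosSemidef) (hPbar : Pbar.IsSymm) (hPP : (P + Pbar).PosSemidef)
    (hQ : Q.PosSemidef) (hQbar : Qbar.IsSymm) (hQQ : (Q + Qbar).PosSemidef)
    (hR : R.PosSemidef) (hRbar : Rbar.IsSymm) (hRR : (R + Rbar).PosSemidef)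
    (Υ2 : Matrix (Fin m) (Fin m) ℝ)
    (hΥ2 : Υ2 = R + Rbar + (B + Bbar)ᵀ * (P + Pbar) * (B + Bbar)
        + σ ^ 2 • ((D + Dbar)ᵀ * P * (D + Dbar)))
    (hU : IsUnit Υ2)
    (M2 : Matrix (Fin m) (Fin n) ℝ)
    (hM2 : M2 = (B + Bbar)ᵀ * (P + Pbar) * (A + Abar)
        + σ ^ 2 • ((D + Dbar)ᵀ * P * (C + Cbar)))
    (S : Matrix (Fin n) (Fin n) ℝ)
    (hS : S = Q + Qbar + (A + Abar)ᵀ * (P + Pbar) * (A + Abar)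
        + σ ^ 2 • ((C + Cbar)ᵀ * P * (C + Cbar)) - M2ᵀ * Υ2⁻¹ * M2) :
    S.PosSemidef := by
  have hPsym : Pᵀ = P := by
    have := hP.isHermitian
    rwa [IsHermitian, conjTranspose_eq_transpose_of_trivial] at this
  have hPPsym : (P + Pbar)ᵀ = (P + Pbar) := by
    have := hPP.isHermitian
    rwa [IsHermitian, conjTranspose_eq_transpose_of_trivial] at this
  have hRRsym : (R + Rbar)ᵀ = (R + Rbar) := by
    have := hRR.isHermitian
    rwa [IsHermitian, conjTranspose_eq_transpose_of_trivial] at this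
  have hY : Υ2ᵀ = Υ2 := by
    rw [hΥ2]
    simp only [transpose_add, transpose_mul, transpose_smul, transpose_transpose, hPsym,
      hPPsym, hRRsym, Matrix.mul_assoc]
  set L : Matrix (Fin m) (Fin n) ℝ := -(Υ2⁻¹ * M2) with hL
  have e1 := expand (A+Abar) (C+Cbar) (B+Bbar) (D+Dbar) (P+Pbar) P hPPsym hPsym
      (R+Rbar) (Q+Qbar) σ L
  rw [← hΥ2, ← hM2, hL, Lident Υ2 hY hU M2] at e1
  have key : S = (Q + Qbar) + Lᵀ*(R+Rbar)*L
      + ((A+Abar)+(B+Bbar)*L)ᵀ*(P+Pbar)*((A+Abar)+(B+Bbar)*L)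
      + σ^2 • (((C+Cbar)+(D+Dbar)*L)ᵀ*P*((C+Cbar)+(D+Dbar)*L)) := by
    rw [hS, e1]
    abel
  rw [key]
  exact (((hQQ.add (psd_conj hRR L)).add (psd_conj hPP _)).add (by
    have h2 : σ^2 • ((((C+Cbar)+(D+Dbar)*L))ᵀ*P*(((C+Cbar)+(D+Dbar)*L)))
        = (σ • ((C+Cbar)+(D+Dbar)*L))ᵀ * P * (σ • ((C+Cbar)+(D+Dbar)*L)) := by
      simp only [transpose_smul, Matrix.smul_mul, Matrix.mul_smul, smul_smul, sq]
    rw [h2]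
    exact psd_conj hP _))
end

section
/- Block upper-triangular structure from a semidefinite Lyapunov solution: let 𝒬 ≥ 0, P ≥ 0 be symmetric matrices satisfying P = 𝒬 + A'PA + σ²C₁'PC₁ + σ²C₂'PC₂, and suppose P is block-diagonalized as U'PU = diag(0, P₂) with P₂ > 0 for an orthogonal U. Writing U'AU, U'C₁U, U'C₂U, U'𝒬U in corresponding 2×2 block form, the lower-left blocks of U'AU, U'C₁U, U'C₂U all vanish, and U'𝒬U = diag(0, 𝒬₂) for some 𝒬₂ ≥ 0. -/
open Matrix

/-- Block upper-triangular structure of the closed-loop matrices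
arising from a semidefinite Lyapunov solution block-diagonalized as diag(0, P₂). -/
theorem stmt12 (n1 n2 : ℕ)
    (A C1 C2 Q P U : Matrix (Fin n1 ⊕ Fin n2) (Fin n1 ⊕ Fin n2) ℝ)
    (σ : ℝ) (hσ : σ ≠ 0)
    (hQ : Q.PosSemidef) (hP : P.PosSemidef)
    (hU : Uᵀ * U = 1)
    (P2 : Matrix (Fin n2) (Fin n2) ℝ) (hP2 : P2.PosDef)
    (hPblock : Uᵀ * P * U = Matrix.fromBlocks 0 0 0 P2)
    (hLyap : P = Q + Aᵀ * P * A + σ ^ 2 • (C1ᵀ * P * C1) + σ ^ 2 • (C2ᵀ * P * C2)) :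
    (Uᵀ * A * U).toBlocks₂₁ = 0 ∧
    (Uᵀ * C1 * U).toBlocks₂₁ = 0 ∧
    (Uᵀ * C2 * U).toBlocks₂₁ = 0 ∧
    ∃ Q2 : Matrix (Fin n2) (Fin n2) ℝ, Q2.PosSemidef ∧
      Uᵀ * Q * U = Matrix.fromBlocks 0 0 0 Q2 := by
  classical
  have hUU : U * Uᵀ = 1 := mul_eq_one_comm.mp hU
  have hσ2 : (0:ℝ) < σ ^ 2 := by positivity
  -- the test vectors
  set v : Fin n1 → (Fin n1 ⊕ Fin n2) → ℝ := fun j => Pi.single (Sum.inl j) 1 with hv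
  set w : Fin n1 → (Fin n1 ⊕ Fin n2) → ℝ := fun j => U *ᵥ v j with hw
  -- quadratic form of P vanishes on w j
  have hPv : ∀ j, (Uᵀ * P * U) *ᵥ v j = 0 := by
    intro j
    rw [hPblock, hv]
    ext i
    cases i <;> simp [mulVec_single]
  have hquad : ∀ (M : Matrix (Fin n1 ⊕ Fin n2) (Fin n1 ⊕ Fin n2) ℝ) (x : _ → ℝ),
      x ⬝ᵥ (Uᵀ * M * U) *ᵥ x = (U *ᵥ x) ⬝ᵥ M *ᵥ (U *ᵥ x) := by
    intro M x
    rw [← mulVec_mulVec, ← mulVec_mulVec, dotProduct_mulVec x Uᵀ, vecMul_transpose]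
  have hwPw : ∀ j, (w j) ⬝ᵥ P *ᵥ (w j) = 0 := by
    intro j
    rw [hw]
    dsimp only
    rw [← hquad, hPv, dotProduct_zero]
  -- expand the Lyapunov equation along w j
  have hexp : ∀ j,
      (w j) ⬝ᵥ Q *ᵥ (w j) + (A *ᵥ w j) ⬝ᵥ P *ᵥ (A *ᵥ w j)
        + σ ^ 2 * ((C1 *ᵥ w j) ⬝ᵥ P *ᵥ (C1 *ᵥ w j))
        + σ ^ 2 * ((C2 *ᵥ w j) ⬝ᵥ P *ᵥ (C2 *ᵥ w j)) = 0 := by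
    intro j
    have h0 := hwPw j
    conv_lhs at h0 => rw [hLyap]
    rw [← h0]
    have hterm : ∀ (M : Matrix (Fin n1 ⊕ Fin n2) (Fin n1 ⊕ Fin n2) ℝ) (x : _ → ℝ),
        x ⬝ᵥ (Mᵀ * P * M) *ᵥ x = (M *ᵥ x) ⬝ᵥ P *ᵥ (M *ᵥ x) := by
      intro M x
      rw [← mulVec_mulVec, ← mulVec_mulVec, dotProduct_mulVec x Mᵀ, vecMul_transpose]
    simp only [add_mulVec, dotProduct_add, smul_mulVec, dotProduct_smul,
      smul_eq_mul, hterm]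
  have hnn : ∀ (x : (Fin n1 ⊕ Fin n2) → ℝ), 0 ≤ x ⬝ᵥ P *ᵥ x := by
    intro x; simpa using hP.dotProduct_mulVec_nonneg x
  have hnnQ : ∀ (x : (Fin n1 ⊕ Fin n2) → ℝ), 0 ≤ x ⬝ᵥ Q *ᵥ x := by
    intro x; simpa using hQ.dotProduct_mulVec_nonneg x
  -- each summand vanishes
  have hQw : ∀ j, Q *ᵥ w j = 0 := by
    intro j
    have h := hexp j
    have h1 := hnnQ (w j); have h2 := hnn (A *ᵥ w j)
    have h3 := hnn (C1 *ᵥ w j); have h4 := hnn (C2 *ᵥ w j)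
    have hq : (w j) ⬝ᵥ Q *ᵥ (w j) = 0 := by nlinarith
    have := (hQ.dotProduct_mulVec_zero_iff (w j)).mp (by simpa using hq)
    exact this
  have hPA : ∀ j, P *ᵥ (A *ᵥ w j) = 0 := by
    intro j
    have h := hexp j
    have h1 := hnnQ (w j); have h2 := hnn (A *ᵥ w j)
    have h3 := hnn (C1 *ᵥ w j); have h4 := hnn (C2 *ᵥ w j)
    have hq : (A *ᵥ w j) ⬝ᵥ P *ᵥ (A *ᵥ w j) = 0 := by nlinarith
    exact (hP.dotProduct_mulVec_zero_iff (A *ᵥ w j)).mp (by simpa using hq)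
  have hPC1 : ∀ j, P *ᵥ (C1 *ᵥ w j) = 0 := by
    intro j
    have h := hexp j
    have h1 := hnnQ (w j); have h2 := hnn (A *ᵥ w j)
    have h3 := hnn (C1 *ᵥ w j); have h4 := hnn (C2 *ᵥ w j)
    have hq : (C1 *ᵥ w j) ⬝ᵥ P *ᵥ (C1 *ᵥ w j) = 0 := by nlinarith
    exact (hP.dotProduct_mulVec_zero_iff (C1 *ᵥ w j)).mp (by simpa using hq)
  have hPC2 : ∀ j, P *ᵥ (C2 *ᵥ w j) = 0 := by
    intro j
    have h := hexp j
    have h1 := hnnQ (w j); have h2 := hnn (A *ᵥ w j)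
    have h3 := hnn (C1 *ᵥ w j); have h4 := hnn (C2 *ᵥ w j)
    have hq : (C2 *ᵥ w j) ⬝ᵥ P *ᵥ (C2 *ᵥ w j) = 0 := by nlinarith
    exact (hP.dotProduct_mulVec_zero_iff (C2 *ᵥ w j)).mp (by simpa using hq)
  -- main block-vanishing argument
  have main : ∀ (M : Matrix (Fin n1 ⊕ Fin n2) (Fin n1 ⊕ Fin n2) ℝ),
      (∀ j, P *ᵥ (M *ᵥ w j) = 0) → (Uᵀ * M * U).toBlocks₂₁ = 0 := by
    intro M hM
    ext i j
    -- y = (Uᵀ M U) v j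
    have hcomp : (Uᵀ * P * U) *ᵥ ((Uᵀ * M * U) *ᵥ v j) = 0 := by
      have h2 : U * (Uᵀ * (M * U)) = M * U := by
        rw [← Matrix.mul_assoc, hUU, Matrix.one_mul]
      have hprod : (Uᵀ * P * U) * (Uᵀ * M * U) = Uᵀ * (P * (M * U)) := by
        simp only [Matrix.mul_assoc]
        rw [h2]
      rw [mulVec_mulVec, hprod, ← mulVec_mulVec, ← mulVec_mulVec, ← mulVec_mulVec]
      have : M *ᵥ (U *ᵥ v j) = M *ᵥ w j := rfl
      rw [this, hM j, mulVec_zero]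
    rw [hPblock] at hcomp
    set y : (Fin n1 ⊕ Fin n2) → ℝ := (Uᵀ * M * U) *ᵥ v j with hy
    have hz : P2 *ᵥ (fun i => y (Sum.inr i)) = 0 := by
      ext i
      have := congrFun hcomp (Sum.inr i)
      simpa [mulVec, dotProduct, Fintype.sum_sum_type] using this
    have hz0 : (fun i => y (Sum.inr i)) = 0 := by
      by_contra hne
      have := hP2.dotProduct_mulVec_pos hne
      rw [hz] at this
      simp at this
    have hyi : y (Sum.inr i) = 0 := congrFun hz0 i
    have : y (Sum.inr i) = (Uᵀ * M * U) (Sum.inr i) (Sum.inl j) := by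
      rw [hy, hv]
      simp [mulVec_single]
    simp [Matrix.toBlocks₂₁, this ▸ hyi]
  -- Q block structure
  have hQbarcol : ∀ (j : Fin n1) (i : Fin n1 ⊕ Fin n2),
      (Uᵀ * Q * U) i (Sum.inl j) = 0 := by
    intro j i
    have : (Uᵀ * Q * U) *ᵥ v j = 0 := by
      rw [← mulVec_mulVec, ← mulVec_mulVec]
      have : Q *ᵥ (U *ᵥ v j) = Q *ᵥ w j := rfl
      rw [this, hQw j, mulVec_zero]
    have := congrFun this i
    simpa [hv, mulVec_single] using this
  have hQsym : (Uᵀ * Q * U)ᵀ = Uᵀ * Q * U := by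
    have hQt : Qᵀ = Q := by
      have := hQ.1
      rw [Matrix.IsHermitian] at this
      simpa [Matrix.conjTranspose_eq_transpose_of_trivial] using this
    simp [Matrix.transpose_mul, Matrix.mul_assoc, hQt]
  have hQbarrow : ∀ (j : Fin n1) (i : Fin n1 ⊕ Fin n2),
      (Uᵀ * Q * U) (Sum.inl j) i = 0 := by
    intro j i
    have := congrFun (congrFun hQsym i) (Sum.inl j)
    rw [Matrix.transpose_apply] at this
    rw [this]
    exact hQbarcol j i
  -- PSD of the transformed Q and its 2,2 block
  have hCT : Uᴴ = Uᵀ := by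
    ext i j; simp [Matrix.conjTranspose_apply]
  have hQbarPSD : (Uᵀ * Q * U).PosSemidef := by
    rw [← hCT]
    exact hQ.conjTranspose_mul_mul_same U
  refine ⟨main A hPA, main C1 hPC1, main C2 hPC2,
    (Uᵀ * Q * U).toBlocks₂₂, ?_, ?_⟩
  · have := hQbarPSD.submatrix (Sum.inr : Fin n2 → Fin n1 ⊕ Fin n2)
    convert this using 1
    ext i j; rfl
  · ext i j
    cases i <;> cases j <;>
      simp [hQbarrow, hQbarcol, Matrix.toBlocks₂₂]
end
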